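/- In every matroid congestion game with priority lists and unit-weight players, a pure Nash equilibrium exists. In particular, the greedy algorithm (repeatedly pick a resource of minimum marginal cost and assign it to the highest-priority player for whom it is independent with their current set) terminates with a pure Nash equilibrium. -/

import Mathlib

open Finset

/-- Cost of unit-weight player `i` in a congestion game with priority lists:
sum over the resources in its strategy of `c e` evaluated at the number of
players using `e` with priority at least as high as `i`'s. -/
def matCost {n : ℕ} {E : Type*} [Fintype E] [DecidableEq E]
    (c : E → ℕ → ℝ) (π : E → Fin n → ℕ)
    (s : Fin n → Finset E) (i : Fin n) : ℝ :=
  ∑ e ∈ s i,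
    c e ((Finset.univ.filter (fun i' => e ∈ s i' ∧ π e i' ≤ π e i)).card)

set_option linter.unusedSectionVars false

section Aux

variable {n : ℕ} {E : Type*} [Fintype E] [DecidableEq E]

/-- cost that player `i` pays for resource `e` under profile `s`. -/
def ecostA (c : E → ℕ → ℝ) (π : E → Fin n → ℕ) (s : Fin n → Finset E)
    (i : Fin n) (e : E) : ℝ :=
  c e ((Finset.univ.filter (fun i' => e ∈ s i' ∧ π e i' ≤ π e i)).card)

/-- cost that player `i` would pay for resource `e` if it deviated to use `e`. -/
def dcostA (c : E → ℕ → ℝ) (π : E → Fin n → ℕ) (s : Fin n → Finset E)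
    (i : Fin n) (e : E) : ℝ :=
  c e (1 + (Finset.univ.filter (fun i' => i' ≠ i ∧ e ∈ s i' ∧ π e i' < π e i)).card)

/-- The matroid exchange lemma used to verify the Nash property. -/
lemma exchA (M : Matroid E) (d : E → ℝ) (w : ℕ → ℝ) :
    ∀ (r : ℕ) (A : ℕ → Finset E) (t : Finset E),
      M.Indep ↑t → t.card = r →
      (∀ k < r, (A k).card = k) → (∀ k < r, M.Indep ↑(A k)) →
      (∀ k < r, ∀ e ∉ A k, M.Indep (insert e (↑(A k) : Set E)) → w k ≤ d e) →
      ∑ k ∈ Finset.range r, w k ≤ ∑ e ∈ t, d e := by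
  intro r
  induction r with
  | zero =>
    intro A t _ htc _ _ _
    rw [Finset.card_eq_zero] at htc
    subst htc
    simp
  | succ r ih =>
    intro A t ht htc hA1 hA2 hH
    have hlt : ((A r : Set E)).encard < (↑t : Set E).encard := by
      rw [Set.encard_coe_eq_coe_finsetCard, Set.encard_coe_eq_coe_finsetCard,
        hA1 r (Nat.lt_succ_self r), htc]
      exact_mod_cast Nat.lt_succ_self r
    obtain ⟨e, he, hei⟩ := (hA2 r (Nat.lt_succ_self r)).augment ht hlt
    have het : e ∈ t := he.1
    have hw : w r ≤ d e := hH r (Nat.lt_succ_self r) e (fun h => he.2 (Finset.mem_coe.mpr h)) hei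
    have hrec := ih A (t.erase e)
      (ht.subset (Finset.coe_subset.mpr (Finset.erase_subset _ _)))
      (by rw [Finset.card_erase_of_mem het, htc]; omega)
      (fun k hk => hA1 k (by omega)) (fun k hk => hA2 k (by omega))
      (fun k hk => hH k (by omega))
    calc ∑ k ∈ Finset.range (r + 1), w k = (∑ k ∈ Finset.range r, w k) + w r :=
          Finset.sum_range_succ w r
      _ ≤ (∑ x ∈ t.erase e, d x) + d e := add_le_add hrec hw
      _ = ∑ x ∈ t, d x := Finset.sum_erase_add t d het

lemma sum_range_dget (f : E → ℝ) : ∀ (l : List E),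
    (∑ k ∈ Finset.range l.length,
      if h : k < l.length then f (l.get ⟨k, h⟩) else 0) = (l.map f).sum := by
  intro l
  induction l with
  | nil => simp
  | cons a l ih =>
    show (∑ k ∈ Finset.range (l.length + 1),
      if h : k < l.length + 1 then f ((a :: l).get ⟨k, h⟩) else 0) = _
    rw [Finset.sum_range_succ']
    have h0 : (if h : 0 < l.length + 1 then f ((a :: l).get ⟨0, h⟩) else 0) = f a := by
      rw [dif_pos (Nat.succ_pos _)]
      rfl
    have h1 : ∀ k ∈ Finset.range l.length,
        (if h : k + 1 < l.length + 1 then f ((a :: l).get ⟨k + 1, h⟩) else 0) =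
        (if h : k < l.length then f (l.get ⟨k, h⟩) else 0) := by
      intro k hk
      rw [Finset.mem_range] at hk
      rw [dif_pos (by omega : k + 1 < l.length + 1), dif_pos hk]
      rfl
    rw [Finset.sum_congr rfl h1, ih, h0, List.map_cons, List.sum_cons, add_comm]


/-- The invariant carried by the greedy algorithm: `s*` extends the partial
profile `s` to bases, later assignees of a resource have lower priority than
its earlier users, and each player has an acquisition order whose marginal
costs are dominated by deviation costs. -/
def GoodA (M : Fin n → Matroid E) (c : E → ℕ → ℝ) (π : E → Fin n → ℕ)
    (s sf : Fin n → Finset E) : Prop :=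
  (∀ i, s i ⊆ sf i) ∧ (∀ i, (M i).IsBase (↑(sf i) : Set E)) ∧
  (∀ e (i i' : Fin n), e ∈ sf i → e ∉ s i → e ∈ s i' → π e i' < π e i) ∧
  (∀ i, ∃ l : List E, l.Nodup ∧ (∀ x ∈ l, x ∉ s i) ∧ s i ∪ l.toFinset = sf i ∧
    ∀ (k : ℕ) (hk : k < l.length) (e : E), e ∉ s i ∪ (l.take k).toFinset →
      (M i).Indep (insert e (↑(s i ∪ (l.take k).toFinset) : Set E)) →
      ecostA c π sf i (l.get ⟨k, hk⟩) ≤ dcostA c π sf i e)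

lemma goodA_of_no_feasible (M : Fin n → Matroid E) (c : E → ℕ → ℝ)
    (π : E → Fin n → ℕ) (s : Fin n → Finset E)
    (hind : ∀ i, (M i).Indep ↑(s i))
    (hnone : ∀ e (i : Fin n), e ∉ s i → ¬ (M i).Indep (insert e (↑(s i) : Set E))) :
    GoodA M c π s s := by
  refine ⟨fun i => subset_rfl, fun i => (hind i).isBase_of_forall_insert ?_, ?_, fun i => ?_⟩
  · intro e he
    exact hnone e i (fun h => he.2 (Finset.mem_coe.mpr h))
  · intro e i i' h1 h2 h3
    exact absurd h1 h2
  · refine ⟨[], List.nodup_nil, by simp, by simp, ?_⟩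
    intro k hk
    simp at hk


lemma greedy_auxA (M : Fin n → Matroid E) (c : E → ℕ → ℝ) (hc : ∀ e, Monotone (c e))
    (π : E → Fin n → ℕ) (hπ : ∀ e, Function.Injective (π e)) :
    ∀ (m : ℕ) (s : Fin n → Finset E),
      (∀ i, (M i).Indep ↑(s i)) →
      (∀ e (i i' : Fin n), e ∈ s i' → e ∉ s i →
        (M i).Indep (insert e (↑(s i) : Set E)) → π e i' < π e i) →
      n * Fintype.card E ≤ m + ∑ i, (s i).card →
      ∃ sf, GoodA M c π s sf := by
  classical
  intro m
  induction m with
  | zero =>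
    intro s hind hpre hm
    set F : Finset (E × Fin n) :=
      Finset.univ.filter
        (fun p => p.1 ∉ s p.2 ∧ (M p.2).Indep (insert p.1 (↑(s p.2) : Set E))) with hF
    rcases F.eq_empty_or_nonempty with hFe | hFne
    · refine ⟨s, goodA_of_no_feasible M c π s hind ?_⟩
      intro e i he hi
      have : (e, i) ∈ F := Finset.mem_filter.mpr ⟨Finset.mem_univ _, he, hi⟩
      rw [hFe] at this
      exact absurd this (Finset.notMem_empty _)
    · exfalso
      obtain ⟨⟨e₀, i₀⟩, hpF⟩ := hFne
      have hfe : e₀ ∉ s i₀ := (Finset.mem_filter.mp hpF).2.1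
      -- cardinality contradiction
      obtain ⟨n', rfl⟩ : ∃ k, n = k + 1 := ⟨n - 1, by have := i₀.pos; omega⟩
      have hsplit : ∑ i, (s i).card =
          (s i₀).card + ∑ i ∈ Finset.univ.erase i₀, (s i).card :=
        (Finset.add_sum_erase _ _ (Finset.mem_univ i₀)).symm
      have hbound : ∑ i ∈ Finset.univ.erase i₀, (s i).card ≤ n' * Fintype.card E := by
        calc ∑ i ∈ Finset.univ.erase i₀, (s i).card
            ≤ ∑ _i ∈ Finset.univ.erase i₀, Fintype.card E :=
              Finset.sum_le_sum (fun i _ => Finset.card_le_univ _)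
          _ = n' * Fintype.card E := by
              rw [Finset.sum_const, Finset.card_erase_of_mem (Finset.mem_univ _),
                Finset.card_univ, Fintype.card_fin, smul_eq_mul]
              congr 1
      have hlt : (s i₀).card < Fintype.card E := by
        refine Finset.card_lt_card ?_
        rw [Finset.ssubset_univ_iff]
        intro h
        exact hfe (h ▸ Finset.mem_univ e₀)
      rw [hsplit] at hm
      have hmul : (n' + 1) * Fintype.card E = n' * Fintype.card E + Fintype.card E := by
        ring
      omega
  | succ m ih =>
    intro s hind hpre hm
    set F : Finset (E × Fin n) :=
      Finset.univ.filter
        (fun p => p.1 ∉ s p.2 ∧ (M p.2).Indep (insert p.1 (↑(s p.2) : Set E))) with hF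
    rcases F.eq_empty_or_nonempty with hFe | hFne
    · refine ⟨s, goodA_of_no_feasible M c π s hind ?_⟩
      intro e i he hi
      have : (e, i) ∈ F := Finset.mem_filter.mpr ⟨Finset.mem_univ _, he, hi⟩
      rw [hFe] at this
      exact absurd this (Finset.notMem_empty _)
    obtain ⟨⟨e₀, ip⟩, hpF, hpmin⟩ :=
      F.exists_min_image
        (fun p => c p.1 ((Finset.univ.filter (fun i' => p.1 ∈ s i')).card + 1)) hFne
    obtain ⟨⟨e₁, i₀⟩, hqF', hqmin⟩ :=
      (F.filter (fun q => q.1 = e₀)).exists_min_image (fun q => π e₀ q.2)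
        ⟨(e₀, ip), Finset.mem_filter.mpr ⟨hpF, rfl⟩⟩
    have he₁ : e₁ = e₀ := (Finset.mem_filter.mp hqF').2
    subst he₁
    have hG1 : e₁ ∉ s i₀ ∧ (M i₀).Indep (insert e₁ (↑(s i₀) : Set E)) :=
      (Finset.mem_filter.mp (Finset.mem_filter.mp hqF').1).2
    have hG2 : ∀ e (i : Fin n), e ∉ s i → (M i).Indep (insert e (↑(s i) : Set E)) →
        c e₁ ((Finset.univ.filter (fun i' => e₁ ∈ s i')).card + 1) ≤
        c e ((Finset.univ.filter (fun i' => e ∈ s i')).card + 1) := by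
      intro e i he hi
      exact hpmin (e, i) (Finset.mem_filter.mpr ⟨Finset.mem_univ _, he, hi⟩)
    have hG3 : ∀ i : Fin n, e₁ ∉ s i → (M i).Indep (insert e₁ (↑(s i) : Set E)) →
        π e₁ i₀ ≤ π e₁ i := by
      intro i he hi
      exact hqmin (e₁, i)
        (Finset.mem_filter.mpr ⟨Finset.mem_filter.mpr ⟨Finset.mem_univ _, he, hi⟩, rfl⟩)
    set s' : Fin n → Finset E := Function.update s i₀ (insert e₁ (s i₀)) with hs'
    have hs'i₀ : s' i₀ = insert e₁ (s i₀) := Function.update_self _ _ _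
    have hs'ne : ∀ i : Fin n, i ≠ i₀ → s' i = s i := fun i hi =>
      Function.update_of_ne hi _ _
    have hsub' : ∀ i, s i ⊆ s' i := by
      intro i
      by_cases hii : i = i₀
      · subst hii; rw [hs'i₀]; exact Finset.subset_insert _ _
      · rw [hs'ne i hii]
    have hind' : ∀ i, (M i).Indep ↑(s' i) := by
      intro i
      by_cases hii : i = i₀
      · subst hii; rw [hs'i₀, Finset.coe_insert]; exact hG1.2
      · rw [hs'ne i hii]; exact hind i
    have hpre' : ∀ e (i i' : Fin n), e ∈ s' i' → e ∉ s' i →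
        (M i).Indep (insert e (↑(s' i) : Set E)) → π e i' < π e i := by
      intro e i i' h1 h2 h3
      have hfs : e ∉ s i := fun h => h2 (hsub' i h)
      have hfsi : (M i).Indep (insert e (↑(s i) : Set E)) :=
        h3.subset (Set.insert_subset_insert (Finset.coe_subset.mpr (hsub' i)))
      by_cases hii' : i' = i₀
      · rw [hii', hs'i₀, Finset.mem_insert] at h1
        rcases h1 with rfl | h1
        · -- e = e₁, i' = i₀ : use the greedy tie-break
          have hne : i ≠ i₀ := by
            intro h
            rw [h] at h2
            exact h2 (hs'i₀ ▸ Finset.mem_insert_self _ _)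
          have hle := hG3 i hfs hfsi
          rw [hii']
          rcases lt_or_eq_of_le hle with h | h
          · exact h
          · exact absurd (hπ _ h) (Ne.symm hne)
        · rw [hii']
          exact hpre e i i₀ h1 hfs hfsi
      · rw [hs'ne i' hii'] at h1
        exact hpre e i i' h1 hfs hfsi
    have hsum : ∑ i, (s' i).card = (∑ i, (s i).card) + 1 := by
      rw [← Finset.add_sum_erase _ (fun i => (s' i).card) (Finset.mem_univ i₀),
        ← Finset.add_sum_erase _ (fun i => (s i).card) (Finset.mem_univ i₀),
        hs'i₀, Finset.card_insert_of_notMem hG1.1,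
        Finset.sum_congr rfl
          (fun i hi => by rw [hs'ne i (Finset.ne_of_mem_erase hi)])]
      omega
    obtain ⟨sf, h1, h2, h3, h4⟩ := ih s' hind' hpre' (by omega)
    refine ⟨sf, fun i => (hsub' i).trans (h1 i), h2, ?_, ?_⟩
    · -- priority invariant for (s, sf)
      intro e i i' hei hnot hmem
      by_cases hii : e ∈ s' i
      · have hieq : i = i₀ := by
          by_contra h
          rw [hs'ne i h] at hii
          exact hnot hii
        rw [hieq] at hnot ⊢
        rw [hieq, hs'i₀, Finset.mem_insert] at hii
        rcases hii with rfl | hii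
        · exact hpre _ i₀ i' hmem hG1.1 hG1.2
        · exact absurd hii hnot
      · exact h3 e i i' hei hii (hsub' i' hmem)
    · -- chains
      intro i
      by_cases hii : i = i₀
      · subst hii
        obtain ⟨l', hnd, hnotin, hunion, hchain⟩ := h4 i
        rw [hs'i₀] at hnotin hunion hchain
        refine ⟨e₁ :: l', ?_, ?_, ?_, ?_⟩
        · exact List.nodup_cons.mpr
            ⟨fun hmem => hnotin e₁ hmem (Finset.mem_insert_self _ _), hnd⟩
        · intro x hx
          rcases List.mem_cons.mp hx with rfl | hx
          · exact hG1.1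
          · exact fun h => hnotin x hx (Finset.mem_insert_of_mem h)
        · rw [List.toFinset_cons, Finset.union_insert, ← Finset.insert_union]
          exact hunion
        · intro k hk e he hindep
          match k with
          | 0 =>
            -- the key greedy step
            simp only [List.take_zero, List.toFinset_nil, Finset.union_empty] at he hindep
            have hget : (e₁ :: l').get ⟨0, hk⟩ = e₁ := rfl
            rw [hget]
            have hcnt : (Finset.univ.filter
                  (fun i' => e₁ ∈ sf i' ∧ π e₁ i' ≤ π e₁ i)).card ≤
                (Finset.univ.filter (fun i' => e₁ ∈ s i')).card + 1 := by
              refine (Finset.card_le_card ?_).trans (Finset.card_insert_le i _)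
              intro j hj
              rw [Finset.mem_filter] at hj
              obtain ⟨-, hjsf, hjle⟩ := hj
              by_cases hji : j = i
              · rw [hji]; exact Finset.mem_insert_self _ _
              · by_cases hjs : e₁ ∈ s j
                · exact Finset.mem_insert_of_mem
                    (Finset.mem_filter.mpr ⟨Finset.mem_univ _, hjs⟩)
                · exfalso
                  have hns' : e₁ ∉ s' j := by rw [hs'ne j hji]; exact hjs
                  have := h3 e₁ j i hjsf hns'
                    (hs'i₀ ▸ Finset.mem_insert_self _ _)
                  omega
            have hload : (Finset.univ.filter (fun i' => e ∈ s i')).card ≤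
                (Finset.univ.filter
                  (fun i' => i' ≠ i ∧ e ∈ sf i' ∧ π e i' < π e i)).card := by
              apply Finset.card_le_card
              intro j hj
              rw [Finset.mem_filter] at hj ⊢
              have hje : e ∈ s j := hj.2
              have hji : j ≠ i := fun h => he (h ▸ hje)
              exact ⟨Finset.mem_univ _, hji, (h1 j) (hsub' j hje),
                hpre e i j hje he hindep⟩
            show c e₁ _ ≤ c e _
            calc c e₁ ((Finset.univ.filter
                    (fun i' => e₁ ∈ sf i' ∧ π e₁ i' ≤ π e₁ i)).card)
                ≤ c e₁ ((Finset.univ.filter (fun i' => e₁ ∈ s i')).card + 1) :=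
                  hc e₁ hcnt
              _ ≤ c e ((Finset.univ.filter (fun i' => e ∈ s i')).card + 1) :=
                  hG2 e i he hindep
              _ ≤ c e (1 + (Finset.univ.filter
                    (fun i' => i' ≠ i ∧ e ∈ sf i' ∧ π e i' < π e i)).card) :=
                  hc e (by omega)
          | Nat.succ k =>
            have hk' : k < l'.length := by
              have := hk; simp only [List.length_cons] at this; omega
            have hpref : s i ∪ ((e₁ :: l').take (k + 1)).toFinset =
                insert e₁ (s i) ∪ (l'.take k).toFinset := by
              rw [List.take_succ_cons, List.toFinset_cons, Finset.union_insert,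
                ← Finset.insert_union]
            rw [hpref] at he hindep
            have hget : (e₁ :: l').get ⟨k + 1, hk⟩ = l'.get ⟨k, hk'⟩ := rfl
            rw [hget]
            exact hchain k hk' e he hindep
      · obtain ⟨l', hnd, hnotin, hunion, hchain⟩ := h4 i
        rw [hs'ne i hii] at hnotin hunion hchain
        exact ⟨l', hnd, hnotin, hunion, hchain⟩

end Aux

/-- In every matroid congestion game with priority lists and unit-weight players,
a pure Nash equilibrium exists: a profile of bases such that no player can
strictly decrease its cost by switching to another basis of its matroid. -/
theorem stmt15 {n : ℕ} {E : Type*} [Fintype E] [DecidableEq E]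
    (M : Fin n → Matroid E)
    (c : E → ℕ → ℝ) (hc : ∀ e, Monotone (c e))
    (π : E → Fin n → ℕ) (hπ : ∀ e, Function.Injective (π e)) :
    ∃ s : Fin n → Finset E,
      (∀ i, (M i).IsBase (↑(s i))) ∧
      (∀ (i : Fin n) (t : Finset E), (M i).IsBase (↑t) →
        matCost c π s i ≤ matCost c π (Function.update s i t) i) := by
  classical
  obtain ⟨sf, hsub, hbase, hR3, hR2⟩ := greedy_auxA M c hc π hπ (n * Fintype.card E)
    (fun _ => ∅) (fun i => by simp)
    (fun e i i' h => absurd h (Finset.notMem_empty _))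
    (by simp)
  refine ⟨sf, hbase, ?_⟩
  intro i t ht
  obtain ⟨l, hnd, -, hunion, hchain⟩ := hR2 i
  simp only [Finset.empty_union] at hunion hchain
  have hrt : t.card = l.length := by
    have h1 : (↑t : Set E).ncard = (↑(sf i) : Set E).ncard :=
      ht.ncard_eq_ncard_of_isBase (hbase i)
    rw [Set.ncard_coe_finset, Set.ncard_coe_finset] at h1
    rw [h1, ← hunion, List.card_toFinset, hnd.dedup]
  have hcards : ∀ k < l.length, ((l.take k).toFinset).card = k := by
    intro k hk
    rw [List.card_toFinset, List.Nodup.dedup ((List.take_sublist k l).nodup hnd),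
      List.length_take]
    omega
  have hindeps : ∀ k < l.length, (M i).Indep ↑((l.take k).toFinset) := by
    intro k _
    refine (hbase i).indep.subset ?_
    rw [← hunion]
    intro x hx
    rw [Finset.mem_coe, List.mem_toFinset] at hx ⊢
    exact List.mem_of_mem_take hx
  have hH : ∀ k < l.length, ∀ e ∉ (l.take k).toFinset,
      (M i).Indep (insert e (↑((l.take k).toFinset) : Set E)) →
      (fun k => if h : k < l.length then ecostA c π sf i (l.get ⟨k, h⟩) else 0) k ≤
        dcostA c π sf i e := by
    intro k hk e he hins
    show (if h : k < l.length then ecostA c π sf i (l.get ⟨k, h⟩) else 0) ≤ _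
    rw [dif_pos hk]
    exact hchain k hk e he hins
  have hex := exchA (M i) (dcostA c π sf i)
    (fun k => if h : k < l.length then ecostA c π sf i (l.get ⟨k, h⟩) else 0)
    l.length (fun k => (l.take k).toFinset) t ht.indep hrt hcards hindeps hH
  have hc1 : matCost c π sf i = ∑ e ∈ sf i, ecostA c π sf i e := rfl
  have hc2 : matCost c π (Function.update sf i t) i = ∑ e ∈ t, dcostA c π sf i e := by
    show ∑ e ∈ Function.update sf i t i, _ = _
    rw [Function.update_self]
    refine Finset.sum_congr rfl ?_
    intro e het
    show c e _ = c e _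
    congr 1
    have hset : Finset.univ.filter
        (fun i' => e ∈ Function.update sf i t i' ∧ π e i' ≤ π e i) =
        insert i (Finset.univ.filter
          (fun i' => i' ≠ i ∧ e ∈ sf i' ∧ π e i' < π e i)) := by
      ext j
      simp only [Finset.mem_filter, Finset.mem_insert, Finset.mem_univ, true_and]
      constructor
      · rintro ⟨hj1, hj2⟩
        by_cases hji : j = i
        · exact Or.inl hji
        · rw [Function.update_of_ne hji] at hj1
          exact Or.inr ⟨hji, hj1, lt_of_le_of_ne hj2 (fun hh => hji (hπ e hh))⟩
      · rintro (rfl | ⟨hj0, hj1, hj2⟩)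
        · rw [Function.update_self]; exact ⟨het, le_refl _⟩
        · rw [Function.update_of_ne hj0]; exact ⟨hj1, le_of_lt hj2⟩
    rw [hset, Finset.card_insert_of_notMem (by simp)]
    omega
  rw [hc1, hc2]
  calc ∑ e ∈ sf i, ecostA c π sf i e
      = ∑ e ∈ l.toFinset, ecostA c π sf i e := by rw [hunion]
    _ = (l.map (ecostA c π sf i)).sum := List.sum_toFinset _ hnd
    _ = ∑ k ∈ Finset.range l.length,
          (if h : k < l.length then ecostA c π sf i (l.get ⟨k, h⟩) else 0) :=
        (sum_range_dget _ l).symm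
    _ ≤ ∑ e ∈ t, dcostA c π sf i e := hex
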